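/- Let A, B ∈ SO(3) be rotations by angles α and β respectively, with rotation axes both in the xy-plane forming angle γ (axis of A along the x-axis). Then for any multi-index I_m with |I_m| = n, writing W(α,β,γ) = A^{s₁}B^{r₁}⋯A^{s_m}B^{r_m} as a unit quaternion depending smoothly on (α,β,γ), the second derivative with respect to α satisfies ‖∂²_α W(α,β,γ)‖² ≤ n⁴ for all (α,β,γ). -/

import Mathlib

open Quaternion

/-- The quaternion `cos(sα) + i sin(sα)` representing `A^s`, where `A` is rotation by angle
`2α` about the `Ox`-axis. -/
noncomputable def qA (s : ℤ) (α : ℝ) : ℍ[ℝ] :=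
  ⟨Real.cos (s * α), Real.sin (s * α), 0, 0⟩

/-- The quaternion `cos(rβ) + sin(rβ)(i cos γ + j sin γ)` representing `B^r`, where `B` is
rotation by angle `2β` about the axis in the `xy`-plane at angle `γ` to `Ox`. -/
noncomputable def qB (r : ℤ) (β γ : ℝ) : ℍ[ℝ] :=
  ⟨Real.cos (r * β), Real.sin (r * β) * Real.cos γ, Real.sin (r * β) * Real.sin γ, 0⟩

/-- The quaternion-valued word `W_{I_m}(α,β,γ)` for the multi-index
`I_m = ((s_1,r_1),…,(s_m,r_m))`. -/
noncomputable def qWord (l : List (ℤ × ℤ)) (α β γ : ℝ) : ℍ[ℝ] :=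
  (l.map fun p => qA p.1 α * qB p.2 β γ).prod

/-- `|I_m| = Σ_p (|s_p| + |r_p|)`. -/
def wordLen (l : List (ℤ × ℤ)) : ℕ := (l.map fun p => p.1.natAbs + p.2.natAbs).sum

/- ### Auxiliary material -/

noncomputable def qi : ℍ[ℝ] := ⟨0, 1, 0, 0⟩

noncomputable def qA1 (s : ℤ) (a : ℝ) : ℍ[ℝ] :=
  ((s : ℝ) * -Real.sin (s * a)) • (1 : ℍ[ℝ]) + ((s : ℝ) * Real.cos (s * a)) • qi

noncomputable def qA2 (s : ℤ) (a : ℝ) : ℍ[ℝ] :=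
  ((s : ℝ) * ((s : ℝ) * -Real.cos (s * a))) • (1 : ℍ[ℝ]) +
    ((s : ℝ) * ((s : ℝ) * -Real.sin (s * a))) • qi

lemma norm_eq_of_normSq {q : ℍ[ℝ]} {v : ℝ} (hv : 0 ≤ v) (h : normSq q = v * v) : ‖q‖ = v :=
  (mul_self_inj (norm_nonneg q) hv).mp (by rw [← Quaternion.normSq_eq_norm_mul_self, h])

lemma hasDerivAt_smul_one_qi {f g : ℝ → ℝ} {f' g' : ℝ} {a : ℝ}
    (hf : HasDerivAt f f' a) (hg : HasDerivAt g g' a) :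
    HasDerivAt (fun x => f x • (1 : ℍ[ℝ]) + g x • qi) (f' • (1 : ℍ[ℝ]) + g' • qi) a :=
  (hf.smul_const _).add (hg.smul_const _)

lemma hasDerivAt_linarg (s : ℤ) (a : ℝ) :
    HasDerivAt (fun x : ℝ => (s : ℝ) * x) (s : ℝ) a := by
  simpa using (hasDerivAt_id a).const_mul (s : ℝ)

lemma hasDerivAt_cos_lin (s : ℤ) (a : ℝ) :
    HasDerivAt (fun x : ℝ => Real.cos ((s : ℝ) * x)) ((s : ℝ) * -Real.sin (s * a)) a := by
  have h := (Real.hasDerivAt_cos ((s : ℝ) * a)).comp a (hasDerivAt_linarg s a)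
  simp only [Function.comp_def] at h
  exact h.congr_deriv (by ring)

lemma hasDerivAt_sin_lin (s : ℤ) (a : ℝ) :
    HasDerivAt (fun x : ℝ => Real.sin ((s : ℝ) * x)) ((s : ℝ) * Real.cos (s * a)) a := by
  have h := (Real.hasDerivAt_sin ((s : ℝ) * a)).comp a (hasDerivAt_linarg s a)
  simp only [Function.comp_def] at h
  exact h.congr_deriv (by ring)

lemma qA_eq (s : ℤ) (a : ℝ) :
    qA s a = Real.cos ((s : ℝ) * a) • (1 : ℍ[ℝ]) + Real.sin ((s : ℝ) * a) • qi := by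
  ext <;> simp [qA] <;> simp [qi]

lemma hasDerivAt_qA (s : ℤ) (a : ℝ) : HasDerivAt (fun x => qA s x) (qA1 s a) a := by
  simp only [funext (qA_eq s), qA1]
  exact hasDerivAt_smul_one_qi (hasDerivAt_cos_lin s a) (hasDerivAt_sin_lin s a)

lemma hasDerivAt_qA1 (s : ℤ) (a : ℝ) : HasDerivAt (fun x => qA1 s x) (qA2 s a) a := by
  unfold qA1 qA2
  have h1 : HasDerivAt (fun x : ℝ => (s : ℝ) * -Real.sin ((s : ℝ) * x))
      ((s : ℝ) * ((s : ℝ) * -Real.cos (s * a))) a := by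
    have := ((hasDerivAt_sin_lin s a).neg).const_mul (s : ℝ)
    exact this.congr_deriv (by ring)
  have h2 : HasDerivAt (fun x : ℝ => (s : ℝ) * Real.cos ((s : ℝ) * x))
      ((s : ℝ) * ((s : ℝ) * -Real.sin (s * a))) a := by
    have := (hasDerivAt_cos_lin s a).const_mul (s : ℝ)
    convert this using 1 <;> ring
  exact hasDerivAt_smul_one_qi h1 h2

lemma norm_qA (s : ℤ) (a : ℝ) : ‖qA s a‖ = 1 := by
  refine norm_eq_of_normSq zero_le_one ?_
  rw [Quaternion.normSq_def']
  show Real.cos ((s:ℝ) * a) ^ 2 + Real.sin ((s:ℝ) * a) ^ 2 + 0 ^ 2 + 0 ^ 2 = 1 * 1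
  nlinarith [Real.sin_sq_add_cos_sq ((s : ℝ) * a)]

lemma norm_qA1 (s : ℤ) (a : ℝ) : ‖qA1 s a‖ = |(s : ℝ)| := by
  refine norm_eq_of_normSq (abs_nonneg _) ?_
  have h1 : qA1 s a = ⟨(s : ℝ) * -Real.sin (s * a), (s : ℝ) * Real.cos (s * a), 0, 0⟩ := by
    ext <;> simp [qA1] <;> simp [qi]
  rw [Quaternion.normSq_def', h1, abs_mul_abs_self]
  show ((s:ℝ) * -Real.sin ((s:ℝ) * a)) ^ 2 + ((s:ℝ) * Real.cos ((s:ℝ) * a)) ^ 2 + 0 ^ 2 + 0 ^ 2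
    = (s:ℝ) * (s:ℝ)
  nlinarith [Real.sin_sq_add_cos_sq ((s : ℝ) * a)]

lemma norm_qA2 (s : ℤ) (a : ℝ) : ‖qA2 s a‖ = |(s : ℝ)| * |(s : ℝ)| := by
  refine norm_eq_of_normSq (by positivity) ?_
  have h1 : qA2 s a = ⟨(s : ℝ) * ((s : ℝ) * -Real.cos (s * a)),
      (s : ℝ) * ((s : ℝ) * -Real.sin (s * a)), 0, 0⟩ := by
    ext <;> simp [qA2] <;> simp [qi]
  rw [Quaternion.normSq_def', h1, abs_mul_abs_self]
  show ((s:ℝ) * ((s:ℝ) * -Real.cos ((s:ℝ) * a))) ^ 2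
      + ((s:ℝ) * ((s:ℝ) * -Real.sin ((s:ℝ) * a))) ^ 2 + 0 ^ 2 + 0 ^ 2
    = (s:ℝ) * (s:ℝ) * ((s:ℝ) * (s:ℝ))
  nlinarith [Real.sin_sq_add_cos_sq ((s : ℝ) * a)]

lemma norm_qB (r : ℤ) (β γ : ℝ) : ‖qB r β γ‖ = 1 := by
  refine norm_eq_of_normSq zero_le_one ?_
  rw [Quaternion.normSq_def']
  show Real.cos ((r:ℝ) * β) ^ 2 + (Real.sin ((r:ℝ) * β) * Real.cos γ) ^ 2
      + (Real.sin ((r:ℝ) * β) * Real.sin γ) ^ 2 + 0 ^ 2 = 1 * 1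
  nlinarith [Real.sin_sq_add_cos_sq ((r : ℝ) * β), Real.sin_sq_add_cos_sq γ]

lemma abs_cast_natAbs (s : ℤ) : |(s : ℝ)| = (s.natAbs : ℝ) := by
  rw [Nat.cast_natAbs]; exact Int.cast_abs.symm

/-- Sum of the `|s_p|`'s. -/
def sLen (l : List (ℤ × ℤ)) : ℕ := (l.map fun p => p.1.natAbs).sum

lemma key (β γ : ℝ) (l : List (ℤ × ℤ)) : ∃ W1 W2 : ℝ → ℍ[ℝ],
    (∀ a, HasDerivAt (fun x => qWord l x β γ) (W1 a) a) ∧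
    (∀ a, HasDerivAt W1 (W2 a) a) ∧
    (∀ a, ‖qWord l a β γ‖ = 1) ∧
    (∀ a, ‖W1 a‖ ≤ (sLen l : ℝ)) ∧
    (∀ a, ‖W2 a‖ ≤ (sLen l : ℝ) ^ 2) := by
  induction l with
  | nil =>
    refine ⟨fun _ => 0, fun _ => 0, fun a => ?_, fun a => ?_, fun a => ?_, fun a => ?_,
      fun a => ?_⟩
    · simpa [qWord] using hasDerivAt_const a (1 : ℍ[ℝ])
    · exact hasDerivAt_const a 0
    · simp [qWord]
    · simp [sLen]
    · simp [sLen]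
  | cons p t ih =>
    obtain ⟨V1, V2, hV1, hV2, hn0, hn1, hn2⟩ := ih
    set c := qB p.2 β γ with hc
    set s := p.1 with hs
    have hcn : ‖c‖ = 1 := by rw [hc]; exact norm_qB _ _ _
    have hqw : ∀ x, qWord (p :: t) x β γ = (qA s x * c) * qWord t x β γ := by
      intro x; simp [qWord, mul_assoc, hs, hc]
    have habs : |(s : ℝ)| = (s.natAbs : ℝ) := abs_cast_natAbs s
    have hsl : (sLen (p :: t) : ℝ) = (s.natAbs : ℝ) + (sLen t : ℝ) := by
      simp [sLen, hs]
    refine ⟨fun a => (qA1 s a * c) * qWord t a β γ + (qA s a * c) * V1 a,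
      fun a => ((qA2 s a * c) * qWord t a β γ + (qA1 s a * c) * V1 a) +
        ((qA1 s a * c) * V1 a + (qA s a * c) * V2 a), ?_, ?_, ?_, ?_, ?_⟩
    · intro a
      have := (((hasDerivAt_qA s a).mul_const c).mul (hV1 a))
      rw [funext hqw]; exact this
    · intro a
      exact (((hasDerivAt_qA1 s a).mul_const c).mul (hV1 a)).add
        (((hasDerivAt_qA s a).mul_const c).mul (hV2 a))
    · intro a
      rw [hqw a, norm_mul, norm_mul, norm_qA, hcn, hn0 a]; ring
    · intro a
      rw [hsl]
      calc ‖(qA1 s a * c) * qWord t a β γ + (qA s a * c) * V1 a‖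
          ≤ ‖(qA1 s a * c) * qWord t a β γ‖ + ‖(qA s a * c) * V1 a‖ := norm_add_le _ _
        _ = |(s : ℝ)| * 1 + 1 * ‖V1 a‖ := by
            rw [norm_mul, norm_mul, norm_mul, norm_mul, norm_qA, norm_qA1, hcn, hn0 a]; ring
        _ ≤ (s.natAbs : ℝ) + (sLen t : ℝ) := by
            rw [habs]; have := hn1 a; linarith
    · intro a
      rw [hsl]
      have hV1a := hn1 a
      have hV2a := hn2 a
      have hV1n : (0:ℝ) ≤ ‖V1 a‖ := norm_nonneg _
      have hst : (0:ℝ) ≤ (sLen t : ℝ) := Nat.cast_nonneg _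
      have hsn : (0:ℝ) ≤ (s.natAbs : ℝ) := Nat.cast_nonneg _
      calc ‖((qA2 s a * c) * qWord t a β γ + (qA1 s a * c) * V1 a) +
            ((qA1 s a * c) * V1 a + (qA s a * c) * V2 a)‖
          ≤ ‖(qA2 s a * c) * qWord t a β γ‖ + ‖(qA1 s a * c) * V1 a‖ +
            (‖(qA1 s a * c) * V1 a‖ + ‖(qA s a * c) * V2 a‖) := by
            refine (norm_add_le _ _).trans ?_
            gcongr <;> exact norm_add_le _ _
        _ = |(s : ℝ)| * |(s : ℝ)| * 1 + |(s : ℝ)| * ‖V1 a‖ +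
            (|(s : ℝ)| * ‖V1 a‖ + 1 * ‖V2 a‖) := by
            simp only [norm_mul, norm_qA, norm_qA1, norm_qA2, hcn, hn0 a]; ring
        _ ≤ ((s.natAbs : ℝ) + (sLen t : ℝ)) ^ 2 := by
            rw [habs]; nlinarith [mul_le_mul_of_nonneg_left hV1a hsn]

lemma sLen_le_wordLen (l : List (ℤ × ℤ)) : sLen l ≤ wordLen l := by
  induction l with
  | nil => simp [sLen, wordLen]
  | cons p t ih => simp only [sLen, wordLen, List.map_cons, List.sum_cons] at *; omega

/-- For any multi-index `I_m` with `|I_m| = n`, the quaternion-valued word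
`W(α,β,γ) = A^{s_1}B^{r_1}⋯A^{s_m}B^{r_m}` satisfies `‖∂²_α W(α,β,γ)‖² ≤ n⁴`
for all `(α,β,γ)`. -/
theorem stmt_5 (l : List (ℤ × ℤ)) (hnz : ∀ q ∈ l, q.1 ≠ 0 ∧ q.2 ≠ 0) (α β γ : ℝ) :
    ‖deriv (deriv fun a => qWord l a β γ) α‖ ^ 2 ≤ (wordLen l : ℝ) ^ 4 := by
  obtain ⟨W1, W2, h1, h2, _, _, hb⟩ := key β γ l
  have hd1 : (deriv fun a => qWord l a β γ) = W1 := funext fun a => (h1 a).deriv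
  rw [hd1, (h2 α).deriv]
  have hW2 := hb α
  have hle : (sLen l : ℝ) ≤ (wordLen l : ℝ) := by exact_mod_cast sLen_le_wordLen l
  have hsn : (0:ℝ) ≤ (sLen l : ℝ) := Nat.cast_nonneg _
  calc ‖W2 α‖ ^ 2 ≤ ((sLen l : ℝ) ^ 2) ^ 2 := pow_le_pow_left₀ (norm_nonneg _) hW2 2
    _ = (sLen l : ℝ) ^ 4 := by ring
    _ ≤ (wordLen l : ℝ) ^ 4 := pow_le_pow_left₀ hsn hle 4
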